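/- Let α > -1, a ≠ -1, and n ≥ 1. Define R_n(x) = L_n^α(x) + a·L_n^{α+1}(x). If z and z' are consecutive zeros of L_{n-1}^{α+1}, then R_n(z)·R_n(z') < 0; hence the zeros of R_n interlace with the zeros of L_{n-1}^{α+1}. -/

import Mathlib

open Finset

/-- Generalized Laguerre polynomial `L_n^α(x) = ∑_{k=0}^n (-1)^k C(n+α, n-k) x^k / k!`,
where `C(n+α, n-k) = (∏_{i=1}^{n-k} (α+k+i)) / (n-k)!`. -/
noncomputable def laguerre (α : ℝ) (n : ℕ) (x : ℝ) : ℝ :=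
  ∑ k ∈ Finset.range (n + 1),
    (-1 : ℝ) ^ k * (∏ i ∈ Finset.range (n - k), (α + k + 1 + i)) /
      ((Nat.factorial (n - k) : ℝ) * (Nat.factorial k : ℝ)) * x ^ k

noncomputable def lagC (β : ℝ) (m k : ℕ) : ℝ :=
  (-1 : ℝ) ^ k * (∏ i ∈ Finset.range (m - k), (β + k + 1 + i)) /
      ((Nat.factorial (m - k) : ℝ) * (Nat.factorial k : ℝ))

noncomputable def lagP (β : ℝ) (m : ℕ) : Polynomial ℝ :=
  ∑ k ∈ Finset.range (m + 1), Polynomial.C (lagC β m k) * Polynomial.X ^ k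

lemma laguerre_eq (β : ℝ) (m : ℕ) (x : ℝ) : laguerre β m x = (lagP β m).eval x := by
  simp [laguerre, lagP, lagC, Polynomial.eval_finset_sum]

lemma coeff_lagP (β : ℝ) (m r : ℕ) :
    (lagP β m).coeff r = if r < m + 1 then lagC β m r else 0 := by
  simp [lagP, Polynomial.finset_sum_coeff, Polynomial.coeff_C_mul, Polynomial.coeff_X_pow]

lemma lagC_eq (β : ℝ) (k j : ℕ) :
    lagC β (k + j) k =
      (-1 : ℝ) ^ k * (∏ i ∈ Finset.range j, (β + k + 1 + i)) /
        ((Nat.factorial j : ℝ) * (Nat.factorial k : ℝ)) := by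
  simp [lagC, Nat.add_sub_cancel_left]

lemma fact_cast_succ (j : ℕ) :
    (Nat.factorial (j+1) : ℝ) = (j+1) * Nat.factorial j := by
  push_cast [Nat.factorial_succ]; ring

lemma lagA (α : ℝ) (m : ℕ) :
    lagP α (m+1) = lagP (α+1) (m+1) - lagP (α+1) m := by
  ext r
  simp only [Polynomial.coeff_sub, coeff_lagP]
  rcases lt_or_ge r (m+1) with hr | hr
  · obtain ⟨j, rfl⟩ : ∃ j, m = r + j := ⟨m - r, by omega⟩
    have h1 : r + j + 1 - r = j + 1 := by omega
    have h2 : r + j - r = j := by omega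
    simp only [if_pos (by omega : r < r + j + 1 + 1), if_pos (by omega : r < r + j + 1), lagC,
      h1, h2]
    have hs : ∏ i ∈ Finset.range (j+1), (α + r + 1 + i)
        = (∏ i ∈ Finset.range j, (α + 1 + r + 1 + i)) * (α + r + 1) := by
      rw [Finset.prod_range_succ']
      congr 1
      · apply Finset.prod_congr rfl; intro i _; push_cast; ring
      · push_cast; ring
    have hs2 : ∏ i ∈ Finset.range (j+1), (α + 1 + r + 1 + i)
        = (∏ i ∈ Finset.range j, (α + 1 + r + 1 + i)) * (α + 1 + r + 1 + j) :=
      Finset.prod_range_succ _ _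
    rw [hs, hs2]
    have hf : (Nat.factorial (j+1) : ℝ) = (j+1) * Nat.factorial j := by
      push_cast [Nat.factorial_succ]; ring
    rw [hf]
    have h3 : (Nat.factorial j : ℝ) ≠ 0 := Nat.cast_ne_zero.2 (Nat.factorial_ne_zero j)
    have h4 : (Nat.factorial r : ℝ) ≠ 0 := Nat.cast_ne_zero.2 (Nat.factorial_ne_zero r)
    have h5 : ((j:ℝ)+1) ≠ 0 := by positivity
    field_simp
    ring
  · rcases eq_or_lt_of_le hr with rfl | hr2
    · simp only [if_pos (by omega : m+1 < m+1+1), if_neg (by omega : ¬ m+1 < m+1), lagC]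
      simp
    · simp only [if_neg (by omega : ¬ r < m+1+1), if_neg (by omega : ¬ r < m+1)]
      ring

lemma lagRec (β : ℝ) (m : ℕ) :
    Polynomial.C ((m:ℝ)+2) * lagP β (m+2) =
      (Polynomial.C (2*(m:ℝ)+3+β) - Polynomial.X) * lagP β (m+1)
        - Polynomial.C ((m:ℝ)+1+β) * lagP β m := by
  have hfj : ∀ j : ℕ, (Nat.factorial j : ℝ) ≠ 0 :=
    fun j => Nat.cast_ne_zero.2 (Nat.factorial_ne_zero j)
  ext r
  simp only [Polynomial.coeff_sub, Polynomial.coeff_C_mul, sub_mul]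
  rcases r with _ | k
  · simp only [Polynomial.mul_coeff_zero, Polynomial.coeff_X_zero, zero_mul, coeff_lagP,
      if_pos (Nat.succ_pos _), if_pos (Nat.succ_pos _), Polynomial.coeff_C_mul]
    have e1 : lagC β (m+2) 0 = lagC β (0 + (m+2)) 0 := by norm_num
    have e2 : lagC β (m+1) 0 = lagC β (0 + (m+1)) 0 := by norm_num
    have e3 : lagC β m 0 = lagC β (0 + m) 0 := by norm_num
    rw [e1, e2, e3, lagC_eq, lagC_eq, lagC_eq]
    have p2 : ∏ i ∈ Finset.range (m+2), (β + ((0:ℕ):ℝ) + 1 + i)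
        = (∏ i ∈ Finset.range m, (β + ((0:ℕ):ℝ) + 1 + i)) * (β + 1 + m) * (β + 2 + m) := by
      rw [Finset.prod_range_succ, Finset.prod_range_succ]
      push_cast; ring
    have p1 : ∏ i ∈ Finset.range (m+1), (β + ((0:ℕ):ℝ) + 1 + i)
        = (∏ i ∈ Finset.range m, (β + ((0:ℕ):ℝ) + 1 + i)) * (β + 1 + m) := by
      rw [Finset.prod_range_succ]; push_cast; ring
    rw [p2, p1, fact_cast_succ (m+1), fact_cast_succ m]
    have h1 : ((m:ℝ)+1) ≠ 0 := by positivity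
    have h2 : ((m:ℝ)+1+1) ≠ 0 := by positivity
    field_simp
    push_cast
    ring
  · rw [Polynomial.coeff_X_mul]
    simp only [coeff_lagP]
    rcases lt_or_ge (k+1) (m+1) with hk | hk
    · obtain ⟨j, rfl⟩ : ∃ j, m = (k+1) + j := ⟨m - (k+1), by omega⟩
      simp only [if_pos (by omega : k+1 < (k+1)+j+2+1), if_pos (by omega : k+1 < (k+1)+j+1+1),
        if_pos (by omega : k < (k+1)+j+1+1), if_pos (by omega : k+1 < (k+1)+j+1)]
      have e1 : lagC β (k+1+j+2) (k+1) = lagC β ((k+1) + (j+2)) (k+1) := by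
        congr 1
      have e2 : lagC β (k+1+j+1) (k+1) = lagC β ((k+1) + (j+1)) (k+1) := by
        congr 1
      have e3 : lagC β (k+1+j+1) k = lagC β (k + (j+2)) k := by
        congr 1; omega
      have e4 : lagC β (k+1+j) (k+1) = lagC β ((k+1) + j) (k+1) := by
        congr 1
      rw [e1, lagC_eq, e2, lagC_eq, e3, lagC_eq, e4, lagC_eq]
      have pk2 : ∏ i ∈ Finset.range (j+2), (β + ((k:ℕ):ℝ) + 1 + i)
          = (β + k + 1) * ((∏ i ∈ Finset.range j, (β + (((k+1):ℕ):ℝ) + 1 + i)) * (β + k + 2 + j)) := by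
        rw [Finset.prod_range_succ', Finset.prod_range_succ]
        rw [Finset.prod_congr rfl (fun i _ => by push_cast; ring :
          ∀ i ∈ Finset.range j, (β + ((k:ℕ):ℝ) + 1 + ((i:ℕ)+1:ℕ)) = (β + (((k+1):ℕ):ℝ) + 1 + (i:ℝ)))]
        push_cast
        ring
      have p2 : ∏ i ∈ Finset.range (j+2), (β + (((k+1):ℕ):ℝ) + 1 + i)
          = (∏ i ∈ Finset.range j, (β + (((k+1):ℕ):ℝ) + 1 + i)) * (β + k + 2 + j) * (β + k + 3 + j) := by
        rw [Finset.prod_range_succ, Finset.prod_range_succ]; push_cast; ring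
      have p1 : ∏ i ∈ Finset.range (j+1), (β + (((k+1):ℕ):ℝ) + 1 + i)
          = (∏ i ∈ Finset.range j, (β + (((k+1):ℕ):ℝ) + 1 + i)) * (β + k + 2 + j) := by
        rw [Finset.prod_range_succ]; push_cast; ring
      rw [pk2, p2, p1, fact_cast_succ (j+1), fact_cast_succ j, fact_cast_succ k]
      have h1 : ((j:ℝ)+1) ≠ 0 := by positivity
      have h2 : ((j:ℝ)+1+1) ≠ 0 := by positivity
      have h3 : ((k:ℝ)+1) ≠ 0 := by positivity
      field_simp
      push_cast
      ring
    · rcases eq_or_lt_of_le hk with he | hk2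
      · have hkm : k = m := by omega
        subst hkm
        simp only [if_pos (by omega : k+1 < k+2+1), if_pos (by omega : k+1 < k+1+1),
          if_pos (by omega : k < k+1+1), if_neg (by omega : ¬ k+1 < k+1)]
        have e1 : lagC β (k+2) (k+1) = lagC β ((k+1) + 1) (k+1) := by congr 1
        have e2 : lagC β (k+1) (k+1) = lagC β ((k+1) + 0) (k+1) := by congr 1
        have e3 : lagC β (k+1) k = lagC β (k + 1) k := rfl
        rw [e1, lagC_eq, e2, lagC_eq, e3, lagC_eq]
        simp only [Finset.prod_range_one, Finset.prod_range_zero, Nat.factorial_one,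
          Nat.factorial_zero]
        have h3 : ((k:ℝ)+1) ≠ 0 := by positivity
        rw [fact_cast_succ k]
        field_simp [fact_cast_succ k]
        push_cast
        ring
      · rcases eq_or_lt_of_le (Nat.succ_le_of_lt hk2) with he2 | hk3
        · have hkm : k = m + 1 := by omega
          subst hkm
          simp only [if_pos (by omega : m+1+1 < m+2+1), if_pos (by omega : m+1 < m+1+1),
            if_neg (by omega : ¬ m+1+1 < m+1+1), if_neg (by omega : ¬ m+1+1 < m+1)]
          have e1 : lagC β (m+2) (m+1+1) = lagC β ((m+2) + 0) (m+2) := by congr 1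
          have e2 : lagC β (m+1) (m+1) = lagC β ((m+1) + 0) (m+1) := by congr 1
          rw [e1, lagC_eq, e2, lagC_eq]
          simp only [Finset.prod_range_zero, Nat.factorial_zero]
          rw [fact_cast_succ (m+1), fact_cast_succ m]
          field_simp [fact_cast_succ (m+1), fact_cast_succ m]
          push_cast
          ring
        · simp only [if_neg (by omega : ¬ k+1 < m+2+1), if_neg (by omega : ¬ k+1 < m+1+1),
            if_neg (by omega : ¬ k < m+1+1), if_neg (by omega : ¬ k+1 < m+1)]
          ring

noncomputable def lagW (β : ℝ) (m : ℕ) : Polynomial ℝ :=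
  (lagP β (m+1)).derivative * lagP β m - lagP β (m+1) * (lagP β m).derivative

lemma lagP_zero (β : ℝ) : lagP β 0 = Polynomial.C 1 := by
  have h : lagC β 0 0 = 1 := by norm_num [lagC]
  simp [lagP, h]

lemma lagP_one (β : ℝ) : lagP β 1 = Polynomial.C (β + 1) - Polynomial.X := by
  have h0 : lagC β 1 0 = β + 1 := by norm_num [lagC]
  have h1 : lagC β 1 1 = -1 := by norm_num [lagC]
  simp [lagP, Finset.sum_range_succ, h0, h1]
  ring

lemma lagW_rec (β : ℝ) (m : ℕ) :
    Polynomial.C ((m:ℝ)+2) * lagW β (m+1) =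
      Polynomial.C ((m:ℝ)+1+β) * lagW β m - (lagP β (m+1))^2 := by
  have hrec := lagRec β m
  have hrec' := congrArg Polynomial.derivative hrec
  simp only [Polynomial.derivative_mul, Polynomial.derivative_C, Polynomial.derivative_sub,
    Polynomial.derivative_X, zero_mul, zero_add, zero_sub, one_mul] at hrec'
  unfold lagW
  linear_combination (lagP β (m+1)) * hrec' - (lagP β (m+1)).derivative * hrec

lemma lagW_neg (β : ℝ) (hβ : β > -1) (m : ℕ) (x : ℝ) : (lagW β m).eval x < 0 := by
  induction m with
  | zero =>
      simp [lagW, lagP_zero, lagP_one]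
  | succ m ih =>
      have h := congrArg (Polynomial.eval x) (lagW_rec β m)
      simp only [Polynomial.eval_mul, Polynomial.eval_C, Polynomial.eval_sub,
        Polynomial.eval_pow] at h
      have hm : (0:ℝ) < (m:ℝ) + 2 := by positivity
      have hmb : (0:ℝ) < (m:ℝ) + 1 + β := by
        have : (0:ℝ) ≤ (m:ℝ) := Nat.cast_nonneg m
        linarith
      nlinarith [sq_nonneg ((lagP β (m+1)).eval x), ih]

lemma deriv_nonneg_left (f : Polynomial ℝ) {z z' : ℝ} (hlt : z < z') (h0 : f.eval z = 0)
    (hpos : ∀ u ∈ Set.Ioo z z', 0 < f.eval u) : 0 ≤ (Polynomial.derivative f).eval z := by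
  by_contra hneg
  push_neg at hneg
  have hd : HasDerivAt (fun y => f.eval y) ((Polynomial.derivative f).eval z) z :=
    f.hasDerivAt z
  have hs := hasDerivAt_iff_tendsto_slope.mp hd
  have h2 : Filter.Tendsto (slope (fun y => f.eval y) z) (nhdsWithin z (Set.Ioi z))
      (nhds ((Polynomial.derivative f).eval z)) :=
    hs.mono_left (nhdsWithin_mono z (fun x hx => ne_of_gt hx))
  have hev : ∀ᶠ x in nhdsWithin z (Set.Ioi z), slope (fun y => f.eval y) z x < 0 :=
    h2.eventually_lt_const hneg
  have hIoo : Set.Ioo z z' ∈ nhdsWithin z (Set.Ioi z) :=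
    Ioo_mem_nhdsGT_of_mem ⟨le_refl z, hlt⟩
  obtain ⟨x, hx1, hx2⟩ := (hev.and (Filter.eventually_of_mem hIoo (fun x h => h))).exists
  simp only [slope_def_field, h0, sub_zero] at hx1
  have := div_pos (hpos x hx2) (sub_pos.mpr hx2.1)
  linarith

lemma deriv_nonpos_right (f : Polynomial ℝ) {z z' : ℝ} (hlt : z < z') (h0 : f.eval z' = 0)
    (hpos : ∀ u ∈ Set.Ioo z z', 0 < f.eval u) : (Polynomial.derivative f).eval z' ≤ 0 := by
  by_contra hneg
  push_neg at hneg
  have hd : HasDerivAt (fun y => f.eval y) ((Polynomial.derivative f).eval z') z' :=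
    f.hasDerivAt z'
  have hs := hasDerivAt_iff_tendsto_slope.mp hd
  have h2 : Filter.Tendsto (slope (fun y => f.eval y) z') (nhdsWithin z' (Set.Iio z'))
      (nhds ((Polynomial.derivative f).eval z')) :=
    hs.mono_left (nhdsWithin_mono z' (fun x hx => ne_of_lt hx))
  have hev : ∀ᶠ x in nhdsWithin z' (Set.Iio z'), 0 < slope (fun y => f.eval y) z' x :=
    h2.eventually_const_lt hneg
  have hIoo : Set.Ioo z z' ∈ nhdsWithin z' (Set.Iio z') :=
    Ioo_mem_nhdsLT_of_mem ⟨hlt, le_refl z'⟩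
  obtain ⟨x, hx1, hx2⟩ := (hev.and (Filter.eventually_of_mem hIoo (fun x h => h))).exists
  simp only [slope_def_field, h0, sub_zero] at hx1
  have := div_neg_of_pos_of_neg (hpos x hx2) (sub_neg.mpr hx2.2)
  linarith

theorem R_interlace_with_L_nsub1 (α a : ℝ) (hα : α > -1) (ha : a ≠ -1) (n : ℕ)
    (hn : 1 ≤ n)
    (R : ℝ → ℝ) (hR : ∀ x, R x = laguerre α n x + a * laguerre (α + 1) n x)
    (z z' : ℝ) (hlt : z < z') (hz : laguerre (α + 1) (n - 1) z = 0)
    (hz' : laguerre (α + 1) (n - 1) z' = 0)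
    (hcons : ∀ u ∈ Set.Ioo z z', laguerre (α + 1) (n - 1) u ≠ 0) :
    R z * R z' < 0 ∧ ∃! w, w ∈ Set.Ioo z z' ∧ R w = 0 := by
  obtain ⟨m, rfl⟩ : ∃ m, n = m + 1 := ⟨n - 1, by omega⟩
  simp only [Nat.add_sub_cancel] at hz hz' hcons
  set β : ℝ := α + 1 with hβdef
  have hβ : β > -1 := by simp [hβdef]; linarith
  set p : ℝ → ℝ := fun x => (lagP β m).eval x with hpdef
  set q : ℝ → ℝ := fun x => (lagP β (m+1)).eval x with hqdef
  set p' : ℝ → ℝ := fun x => (Polynomial.derivative (lagP β m)).eval x with hp'def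
  set q' : ℝ → ℝ := fun x => (Polynomial.derivative (lagP β (m+1))).eval x with hq'def
  have hW : ∀ x, q' x * p x - q x * p' x < 0 := by
    intro x
    have := lagW_neg β hβ m x
    simpa [lagW, Polynomial.eval_mul, Polynomial.eval_sub] using this
  have hpz : p z = 0 := by rw [hpdef]; simpa [laguerre_eq] using hz
  have hpz' : p z' = 0 := by rw [hpdef]; simpa [laguerre_eq] using hz'
  have hpne : ∀ u ∈ Set.Ioo z z', p u ≠ 0 := by
    intro u hu
    have := hcons u hu
    simpa [laguerre_eq] using this
  have hRq : ∀ x, R x = (1 + a) * q x - p x := by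
    intro x
    rw [hR x, laguerre_eq, laguerre_eq, lagA α m]
    simp only [Polynomial.eval_sub]
    ring
  have ha' : (1 : ℝ) + a ≠ 0 := by
    intro h; apply ha; linarith
  have hpc : Continuous p := by
    rw [hpdef]; exact Polynomial.continuous _
  have hqc : Continuous q := by
    rw [hqdef]; exact Polynomial.continuous _
  -- constant sign of p on the interval
  have hps : (∀ u ∈ Set.Ioo z z', 0 < p u) ∨ (∀ u ∈ Set.Ioo z z', p u < 0) := by
    by_contra h
    push_neg at h
    obtain ⟨⟨u1, hu1, hu1'⟩, ⟨u2, hu2, hu2'⟩⟩ := h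
    have hu1n : p u1 < 0 := lt_of_le_of_ne hu1' (hpne u1 hu1)
    have hu2n : 0 < p u2 := lt_of_le_of_ne hu2' (Ne.symm (hpne u2 hu2))
    rcases lt_trichotomy u1 u2 with hlt12 | heq | hgt
    · obtain ⟨c, hc, hc0⟩ := intermediate_value_Ioo hlt12.le (hpc.continuousOn)
        (Set.mem_Ioo.mpr ⟨hu1n, hu2n⟩)
      exact hpne c ⟨lt_trans hu1.1 hc.1, lt_trans hc.2 hu2.2⟩ hc0
    · rw [heq] at hu1n; linarith
    · obtain ⟨c, hc, hc0⟩ := intermediate_value_Ioo' hgt.le (hpc.continuousOn)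
        (Set.mem_Ioo.mpr ⟨hu1n, hu2n⟩)
      exact hpne c ⟨lt_trans hu2.1 hc.1, lt_trans hc.2 hu1.2⟩ hc0
  -- q z * p' z > 0 and q z' * p' z' > 0
  have hA : 0 < q z * p' z := by
    have := hW z; rw [hpz] at this; nlinarith
  have hA' : 0 < q z' * p' z' := by
    have := hW z'; rw [hpz'] at this; nlinarith
  -- p' has opposite signs at z and z'
  have hBB : p' z * p' z' < 0 := by
    have hp'zne : p' z ≠ 0 := by
      intro h; rw [h, mul_zero] at hA; exact lt_irrefl 0 hA
    have hp'z'ne : p' z' ≠ 0 := by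
      intro h; rw [h, mul_zero] at hA'; exact lt_irrefl 0 hA'
    rcases hps with hpos | hneg
    · have h1 : 0 ≤ p' z := deriv_nonneg_left (lagP β m) hlt hpz hpos
      have h2 : p' z' ≤ 0 := deriv_nonpos_right (lagP β m) hlt hpz' hpos
      have h1' : 0 < p' z := lt_of_le_of_ne h1 (Ne.symm hp'zne)
      have h2' : p' z' < 0 := lt_of_le_of_ne h2 hp'z'ne
      exact mul_neg_of_pos_of_neg h1' h2'
    · have hpos' : ∀ u ∈ Set.Ioo z z', 0 < (-(lagP β m)).eval u := by
        intro u hu; simpa using hneg u hu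
      have h1 : 0 ≤ (Polynomial.derivative (-(lagP β m))).eval z :=
        deriv_nonneg_left (-(lagP β m)) hlt (by simpa using hpz) hpos'
      have h2 : (Polynomial.derivative (-(lagP β m))).eval z' ≤ 0 :=
        deriv_nonpos_right (-(lagP β m)) hlt (by simpa using hpz') hpos'
      simp only [Polynomial.derivative_neg, Polynomial.eval_neg] at h1 h2
      have h1' : p' z < 0 := lt_of_le_of_ne (by linarith) hp'zne
      have h2' : 0 < p' z' := lt_of_le_of_ne (by linarith) (Ne.symm hp'z'ne)
      exact mul_neg_of_neg_of_pos h1' h2'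
  have hqq : q z * q z' < 0 := by nlinarith [mul_pos hA hA']
  have hRzz : R z * R z' < 0 := by
    have e1 : R z = (1 + a) * q z := by rw [hRq z, hpz]; ring
    have e2 : R z' = (1 + a) * q z' := by rw [hRq z', hpz']; ring
    rw [e1, e2]
    have h2 : 0 < (1 + a)^2 := by
      have := sq_nonneg (1 + a)
      rcases this.eq_or_lt with h | h
      · exact absurd (pow_eq_zero_iff (by norm_num) |>.mp h.symm) ha'
      · exact h
    nlinarith
  refine ⟨hRzz, ?_⟩
  -- existence
  have hRc : ContinuousOn R (Set.Icc z z') := by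
    have : R = fun x => (1 + a) * q x - p x := funext hRq
    rw [this]
    exact (((continuous_const.mul hqc).sub hpc)).continuousOn
  obtain ⟨w, hwmem, hw0⟩ : ∃ w ∈ Set.Ioo z z', R w = 0 := by
    rcases lt_or_ge (R z) 0 with hz0 | hz0
    · have hz'0 : 0 < R z' := by nlinarith
      obtain ⟨w, hw, h0⟩ := intermediate_value_Ioo hlt.le hRc (Set.mem_Ioo.mpr ⟨hz0, hz'0⟩)
      exact ⟨w, hw, h0⟩
    · have hz0' : 0 < R z := by
        rcases hz0.eq_or_lt with h | h
        · exfalso; rw [← h] at hRzz; simp at hRzz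
        · exact h
      have hz'0 : R z' < 0 := by nlinarith
      obtain ⟨w, hw, h0⟩ := intermediate_value_Ioo' hlt.le hRc (Set.mem_Ioo.mpr ⟨hz'0, hz0'⟩)
      exact ⟨w, hw, h0⟩
  -- uniqueness via strict monotonicity of q/p
  set g : ℝ → ℝ := fun x => q x / p x with hgdef
  have hganti : StrictAntiOn g (Set.Ioo z z') := by
    apply strictAntiOn_of_deriv_neg (convex_Ioo z z')
    · exact (hqc.continuousOn).div (hpc.continuousOn) hpne
    · intro x hx
      rw [interior_Ioo] at hx
      have hpx : p x ≠ 0 := hpne x hx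
      have hdq : HasDerivAt q (q' x) x := Polynomial.hasDerivAt _ x
      have hdp : HasDerivAt p (p' x) x := Polynomial.hasDerivAt _ x
      have hdg : HasDerivAt g ((q' x * p x - q x * p' x) / (p x)^2) x := hdq.div hdp hpx
      rw [hdg.deriv]
      apply div_neg_of_neg_of_pos (hW x)
      have := sq_nonneg (p x)
      rcases this.eq_or_lt with h | h
      · exact absurd (pow_eq_zero_iff (by norm_num) |>.mp h.symm) hpx
      · exact h
  have hkey : ∀ y ∈ Set.Ioo z z', R y = 0 → g y = 1 / (1 + a) := by
    intro y hy hy0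
    have hpy : p y ≠ 0 := hpne y hy
    have h1 : (1 + a) * q y = p y := by
      have := hRq y; rw [hy0] at this; linarith
    rw [hgdef]
    field_simp
    linarith [h1]
  refine ⟨w, ⟨hwmem, hw0⟩, ?_⟩
  rintro y ⟨hy, hy0⟩
  exact hganti.injOn hy hwmem ((hkey y hy hy0).trans (hkey w hwmem hw0).symm)
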